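/- Let P : [0,m] → ℝ² be a closed polyomino curve: P(m) = P(0), P takes values in ℤ² at integer parameters, P is affine linear on each interval [v−1,v] for v = 1,…,m, and each restriction P|_{[v−1,v]} is either constant in one coordinate and changes the other by ±1 along an axis-parallel unit segment. Let A := ∫_0^m P₁(t)·P₂′(t) dt (the derivative exists away from the integer points). Then m ≥ 2·⌈2·√|A|⌉, where ⌈−⌉ is the ceiling function. -/

import Mathlib

open MeasureTheory Set
open scoped Classical

lemma seg_aux (P : ℝ → ℝ × ℝ) (a : ℝ)
    (ha : ∀ t ∈ Set.Icc a (a+1), P t = P a + (t - a) • (P (a+1) - P a))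
    (h0 : ((P (a+1)).1 - (P a).1) * ((P (a+1)).2 - (P a).2) = 0) :
    IntervalIntegrable (fun t => (P t).1 * deriv (fun s => (P s).2) t) volume a (a+1) ∧
    ∫ t in a..(a+1), (P t).1 * deriv (fun s => (P s).2) t
      = (P a).1 * ((P (a+1)).2 - (P a).2) := by
  set c0 := (P a).1 * ((P (a+1)).2 - (P a).2) with hc0
  have key : ∀ t ∈ Set.Ioo a (a+1), (P t).1 * deriv (fun s => (P s).2) t = c0 := by
    intro t ht
    have hmem : Set.Ioo a (a+1) ∈ nhds t := Ioo_mem_nhds ht.1 ht.2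
    have hd : deriv (fun s => (P s).2) t = (P (a+1)).2 - (P a).2 := by
      have hev : (fun s => (P s).2)
          =ᶠ[nhds t] fun s => (P a).2 + (s - a) * ((P (a+1)).2 - (P a).2) := by
        filter_upwards [hmem] with s hs
        rw [ha s (Set.Ioo_subset_Icc_self hs)]
        simp [Prod.smul_def, smul_eq_mul]
      rw [hev.deriv_eq]
      have h : HasDerivAt (fun s => (P a).2 + (s - a) * ((P (a+1)).2 - (P a).2))
          ((P (a+1)).2 - (P a).2) t := by
        simpa using (((hasDerivAt_id t).sub_const a).mul_const
          ((P (a+1)).2 - (P a).2)).const_add ((P a).2)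
      exact h.deriv
    have hx : (P t).1 = (P a).1 + (t - a) * ((P (a+1)).1 - (P a).1) := by
      rw [ha t (Set.Ioo_subset_Icc_self ht)]
      simp [Prod.smul_def, smul_eq_mul]
    rw [hd, hx, hc0]
    linear_combination (t - a) * h0
  have hae' : ∀ᵐ t : ℝ, t ∈ Set.uIoc a (a+1) →
      (P t).1 * deriv (fun s => (P s).2) t = c0 := by
    have h1 : ∀ᵐ t : ℝ, t ∉ ({a+1} : Set ℝ) :=
      measure_eq_zero_iff_ae_notMem.mp (measure_singleton _)
    filter_upwards [h1] with t ht1 ht2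
    rw [Set.uIoc_of_le (by linarith : a ≤ a+1)] at ht2
    exact key t ⟨ht2.1, lt_of_le_of_ne ht2.2 (by simpa using ht1)⟩
  have hae : (fun t => (P t).1 * deriv (fun s => (P s).2) t)
      =ᵐ[volume.restrict (Set.uIoc a (a+1))] fun _ => c0 :=
    (ae_restrict_iff' measurableSet_uIoc).mpr hae'
  constructor
  · exact (intervalIntegrable_const (c := c0)).congr_ae hae.symm
  · rw [intervalIntegral.integral_congr_ae hae']
    simp


lemma le_sq_half_sum (a b r : ℝ) (h : r ≤ a * b) : r ≤ ((a+b)/2)^2 := by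
  nlinarith [sq_nonneg (a-b)]

open scoped Classical in
lemma sum_pm (T : Finset ℕ) (g : ℕ → ℝ) (h : ∀ k ∈ T, g k = 1 ∨ g k = -1 ∨ g k = 0) :
    ∑ k ∈ T, g k
      = ((T.filter fun k => g k = 1).card : ℝ) - ((T.filter fun k => g k = -1).card : ℝ) := by
  induction T using Finset.induction_on with
  | empty => simp
  | @insert a s ha ih =>
    rw [Finset.sum_insert ha, ih (fun k hk => h k (Finset.mem_insert_of_mem hk)),
      Finset.filter_insert, Finset.filter_insert]
    have ha1 : a ∉ s.filter (fun k => g k = 1) := fun h' => ha (Finset.mem_of_mem_filter a h')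
    have ha2 : a ∉ s.filter (fun k => g k = -1) := fun h' => ha (Finset.mem_of_mem_filter a h')
    rcases h a (Finset.mem_insert_self a s) with h1|h1|h1 <;>
      norm_num [h1, Finset.card_insert_of_notMem, ha1, ha2] <;> push_cast <;> ring

open scoped Classical in
lemma filter_abs_card (T : Finset ℕ) (g : ℕ → ℝ) (h : ∀ k ∈ T, g k = 1 ∨ g k = -1 ∨ g k = 0) :
    ∑ k ∈ T, |g k|
      = ((T.filter fun k => g k = 1).card : ℝ) + ((T.filter fun k => g k = -1).card : ℝ) := by
  induction T using Finset.induction_on with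
  | empty => simp
  | @insert a s ha ih =>
    rw [Finset.sum_insert ha, ih (fun k hk => h k (Finset.mem_insert_of_mem hk)),
      Finset.filter_insert, Finset.filter_insert]
    have ha1 : a ∉ s.filter (fun k => g k = 1) := fun h' => ha (Finset.mem_of_mem_filter a h')
    have ha2 : a ∉ s.filter (fun k => g k = -1) := fun h' => ha (Finset.mem_of_mem_filter a h')
    rcases h a (Finset.mem_insert_self a s) with h1|h1|h1 <;>
      norm_num [h1, Finset.card_insert_of_notMem, ha1, ha2] <;> push_cast <;> ring

/-- Lemma 4.1, analytic form. Let `P : [0,m] → ℝ²` be a closed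
polyomino curve: `P(m) = P(0)`, `P` takes values in `ℤ²` at integer parameters, `P`
is affine linear on each interval `[k, k+1]`, and each unit segment is axis-parallel
of length 1 (the difference of consecutive integer values is one of `(±1,0)`,
`(0,±1)`). If `A = ∮ x dy = ∫_0^m P₁(t) · P₂′(t) dt`, then `m ≥ 2⌈2√|A|⌉`. -/
theorem polyomino_curve_length_ge (m : ℕ) (P : ℝ → ℝ × ℝ)
    (hclosed : P (m : ℝ) = P 0)
    (hint : ∀ k : ℕ, k ≤ m → ∃ a b : ℤ, P (k : ℝ) = ((a : ℝ), (b : ℝ)))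
    (haffine : ∀ k : ℕ, k < m → ∀ t ∈ Set.Icc (k : ℝ) ((k : ℝ) + 1),
      P t = P (k : ℝ) + (t - (k : ℝ)) • (P ((k : ℝ) + 1) - P (k : ℝ)))
    (hstep : ∀ k : ℕ, k < m →
      P ((k : ℝ) + 1) - P (k : ℝ) = ((1 : ℝ), (0 : ℝ)) ∨
      P ((k : ℝ) + 1) - P (k : ℝ) = ((-1 : ℝ), (0 : ℝ)) ∨
      P ((k : ℝ) + 1) - P (k : ℝ) = ((0 : ℝ), (1 : ℝ)) ∨
      P ((k : ℝ) + 1) - P (k : ℝ) = ((0 : ℝ), (-1 : ℝ)))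
    (A : ℝ)
    (hA : A = ∫ t in (0 : ℝ)..(m : ℝ), (P t).1 * deriv (fun s => (P s).2) t) :
    (m : ℤ) ≥ 2 * ⌈2 * Real.sqrt |A|⌉ := by
  rcases Nat.eq_zero_or_pos m with hm | hm
  · subst hm
    simp only [Nat.cast_zero, intervalIntegral.integral_same] at hA
    simp [hA]
  -- notation
  set f : ℝ → ℝ := fun t => (P t).1 * deriv (fun s => (P s).2) t with hf
  set x : ℕ → ℝ := fun k => (P (k : ℝ)).1 with hxdef
  set y : ℕ → ℝ := fun k => (P (k : ℝ)).2 with hydef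
  set dx : ℕ → ℝ := fun k => x (k + 1) - x k with hdxdef
  set dy : ℕ → ℝ := fun k => y (k + 1) - y k with hdydef
  have hcast : ∀ k : ℕ, ((k + 1 : ℕ) : ℝ) = (k : ℝ) + 1 := by intro k; push_cast; ring
  have e1 : ∀ k : ℕ, dx k = (P ((k:ℝ)+1)).1 - (P (k:ℝ)).1 := by
    intro k; simp only [hdxdef, hxdef, hcast k]
  have e2 : ∀ k : ℕ, dy k = (P ((k:ℝ)+1)).2 - (P (k:ℝ)).2 := by
    intro k; simp only [hdydef, hydef, hcast k]
  have hstep' : ∀ k, k < m → (dx k = 1 ∧ dy k = 0) ∨ (dx k = -1 ∧ dy k = 0) ∨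
      (dx k = 0 ∧ dy k = 1) ∨ (dx k = 0 ∧ dy k = -1) := by
    intro k hk
    have h := hstep k hk
    simp only [Prod.ext_iff, Prod.fst_sub, Prod.snd_sub] at h
    rw [e1 k, e2 k]
    tauto
  -- segment computation
  have hseg : ∀ k, k < m →
      IntervalIntegrable f volume (k : ℝ) ((k : ℝ) + 1) ∧
      (∫ t in (k : ℝ)..((k : ℝ) + 1), f t) = x k * dy k := by
    intro k hk
    have h0 : ((P ((k:ℝ)+1)).1 - (P (k:ℝ)).1) * ((P ((k:ℝ)+1)).2 - (P (k:ℝ)).2) = 0 := by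
      rcases hstep' k hk with h|h|h|h <;> rw [← e1 k, ← e2 k] <;> rw [h.1, h.2] <;> ring
    have hsa := seg_aux P (k : ℝ) (haffine k hk) h0
    refine ⟨hsa.1, ?_⟩
    rw [hsa.2, ← e2 k]
  -- A as a sum
  have hAsum : A = ∑ k ∈ Finset.range m, x k * dy k := by
    have hint' : ∀ k < m, IntervalIntegrable f volume ((fun n : ℕ => (n:ℝ)) k)
        ((fun n : ℕ => (n:ℝ)) (k+1)) := by
      intro k hk
      have := (hseg k hk).1
      simpa [hcast k] using this
    have hsum := intervalIntegral.sum_integral_adjacent_intervals (μ := volume)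
      (a := fun n : ℕ => (n : ℝ)) (n := m) (f := f) hint'
    simp only [Nat.cast_zero] at hsum
    rw [hA, ← hsum]
    refine Finset.sum_congr rfl fun k hk => ?_
    have hk' := Finset.mem_range.mp hk
    rw [← (hseg k hk').2, hcast k]
  -- telescoping sums
  have hdxsum : ∑ k ∈ Finset.range m, dx k = 0 := by
    rw [hdxdef, Finset.sum_range_sub (f := x)]
    simp [hxdef, hclosed]
  have hdysum : ∑ k ∈ Finset.range m, dy k = 0 := by
    rw [hdydef, Finset.sum_range_sub (f := y)]
    simp [hydef, hclosed]
  classical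
  set S := Finset.range m with hS
  set hp := (S.filter fun k => dx k = 1).card with hhp
  set hn := (S.filter fun k => dx k = -1).card with hhn
  set vp := (S.filter fun k => dy k = 1).card with hvpdef
  set vn := (S.filter fun k => dy k = -1).card with hvndef
  have hdx3 : ∀ k ∈ S, dx k = 1 ∨ dx k = -1 ∨ dx k = 0 := by
    intro k hk; rcases hstep' k (Finset.mem_range.mp hk) with h|h|h|h <;> simp [h.1]
  have hdy3 : ∀ k ∈ S, dy k = 1 ∨ dy k = -1 ∨ dy k = 0 := by
    intro k hk; rcases hstep' k (Finset.mem_range.mp hk) with h|h|h|h <;> simp [h.2]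
  have hpn : (hp:ℝ) = (hn:ℝ) := by
    have := sum_pm S dx hdx3; rw [hdxsum] at this; rw [hhp, hhn]; linarith
  have hvpn : (vp:ℝ) = (vn:ℝ) := by
    have := sum_pm S dy hdy3; rw [hdysum] at this; rw [hvpdef, hvndef]; linarith
  have habs1 : ∑ k ∈ S, |dx k| = (hp:ℝ) + (hn:ℝ) := filter_abs_card S dx hdx3
  have habs2 : ∑ k ∈ S, |dy k| = (vp:ℝ) + (vn:ℝ) := filter_abs_card S dy hdy3
  have hmreal : (m:ℝ) = (hp:ℝ) + hn + vp + vn := by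
    have hone : ∀ k ∈ S, |dx k| + |dy k| = 1 := by
      intro k hk
      rcases hstep' k (Finset.mem_range.mp hk) with h|h|h|h <;> rw [h.1, h.2] <;> norm_num
    have : ∑ k ∈ S, (|dx k| + |dy k|) = (m:ℝ) := by
      rw [Finset.sum_congr rfl hone]; simp [hS]
    rw [Finset.sum_add_distrib, habs1, habs2] at this
    linarith
  -- min and max of x over S
  have hne : S.Nonempty := ⟨0, Finset.mem_range.mpr hm⟩
  obtain ⟨i, hiS, hmin⟩ := Finset.exists_min_image S x hne
  obtain ⟨j, hjS, hmax⟩ := Finset.exists_max_image S x hne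
  -- partial sums
  have hr : ∀ n : ℕ, ∑ k ∈ Finset.range n, dx k = x n - x 0 := by
    intro n; rw [hdxdef, Finset.sum_range_sub (f := x)]
  have hparts : ∀ p q : ℕ, p ≤ q → x q - x p = ∑ k ∈ Finset.Ico p q, dx k := by
    intro p q hpq
    rw [Finset.sum_Ico_eq_sub _ hpq, hr, hr]; ring
  have hbT : ∀ T : Finset ℕ, T ⊆ S →
      (∑ k ∈ T, dx k ≤ (hp:ℝ) ∧ -(∑ k ∈ T, dx k) ≤ (hn:ℝ)) := by
    intro T hT
    have h3 : ∀ k ∈ T, dx k = 1 ∨ dx k = -1 ∨ dx k = 0 := fun k hk => hdx3 k (hT hk)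
    rw [sum_pm T dx h3]
    have c1le : ((T.filter fun k => dx k = 1).card : ℝ) ≤ (hp:ℝ) :=
      Nat.cast_le.mpr (Finset.card_le_card (Finset.filter_subset_filter _ hT))
    have c2le : ((T.filter fun k => dx k = -1).card : ℝ) ≤ (hn:ℝ) :=
      Nat.cast_le.mpr (Finset.card_le_card (Finset.filter_subset_filter _ hT))
    have c1nn : (0:ℝ) ≤ ((T.filter fun k => dx k = 1).card : ℝ) := by positivity
    have c2nn : (0:ℝ) ≤ ((T.filter fun k => dx k = -1).card : ℝ) := by positivity
    constructor <;> linarith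
  have hW : 2 * (x j - x i) ≤ (hp:ℝ) + (hn:ℝ) := by
    rcases le_total i j with hij | hij
    · have hx1 : x j - x i = ∑ k ∈ Finset.Ico i j, dx k := hparts i j hij
      have hTs : Finset.Ico i j ⊆ S := by
        intro k hk
        rw [hS, Finset.mem_range]
        have h1 := (Finset.mem_Ico.mp hk).2
        have h2 := Finset.mem_range.mp hjS
        omega
      have hcomp : ∑ k ∈ S \ Finset.Ico i j, dx k + ∑ k ∈ Finset.Ico i j, dx k = 0 := by
        rw [Finset.sum_sdiff hTs, hdxsum]
      have h1 := (hbT _ hTs).1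
      have h2 := (hbT _ (Finset.sdiff_subset (s := S) (t := Finset.Ico i j))).2
      linarith
    · have hx1 : x i - x j = ∑ k ∈ Finset.Ico j i, dx k := hparts j i hij
      have hTs : Finset.Ico j i ⊆ S := by
        intro k hk
        rw [hS, Finset.mem_range]
        have h1 := (Finset.mem_Ico.mp hk).2
        have h2 := Finset.mem_range.mp hiS
        omega
      have hcomp : ∑ k ∈ S \ Finset.Ico j i, dx k + ∑ k ∈ Finset.Ico j i, dx k = 0 := by
        rw [Finset.sum_sdiff hTs, hdxsum]
      have h1 := (hbT _ hTs).2
      have h2 := (hbT _ (Finset.sdiff_subset (s := S) (t := Finset.Ico j i))).1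
      linarith
  -- bound |A|
  set c : ℝ := (x i + x j)/2 with hc
  have hAc : A = ∑ k ∈ S, (x k - c) * dy k := by
    have hexp : ∑ k ∈ S, (x k - c) * dy k
        = ∑ k ∈ S, x k * dy k - c * ∑ k ∈ S, dy k := by
      rw [Finset.mul_sum, ← Finset.sum_sub_distrib]
      exact Finset.sum_congr rfl fun k _ => by ring
    rw [hAsum, hexp, hdysum]; ring
  have hxij : x i ≤ x j := le_trans (hmin j hjS) (le_refl _)
  have hAbound : |A| ≤ ((x j - x i)/2) * ((vp:ℝ) + (vn:ℝ)) := by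
    rw [hAc]
    calc |∑ k ∈ S, (x k - c) * dy k| ≤ ∑ k ∈ S, |(x k - c) * dy k| :=
          Finset.abs_sum_le_sum_abs _ _
    _ ≤ ∑ k ∈ S, ((x j - x i)/2) * |dy k| := by
        refine Finset.sum_le_sum fun k hk => ?_
        rw [abs_mul]
        refine mul_le_mul_of_nonneg_right ?_ (abs_nonneg _)
        have h1 := hmin k hk
        have h2 := hmax k hk
        rw [abs_le, hc]
        constructor <;> [linarith; linarith]
    _ = ((x j - x i)/2) * ((vp:ℝ) + (vn:ℝ)) := by rw [← Finset.mul_sum, habs2]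
  -- conclude
  have hpn' : hp = hn := by exact_mod_cast hpn
  have hvpn' : vp = vn := by exact_mod_cast hvpn
  have hmnat : m = hp + hn + vp + vn := by exact_mod_cast hmreal
  have hm2 : m = 2 * (hp + vp) := by omega
  set n := hp + vp with hndef
  have hvnn : (0:ℝ) ≤ (vp:ℝ) + (vn:ℝ) := add_nonneg (Nat.cast_nonneg _) (Nat.cast_nonneg _)
  have hW2 : x j - x i ≤ (hp:ℝ) := by linarith
  have hvpnn : (0:ℝ) ≤ (vp:ℝ) := Nat.cast_nonneg _
  have hab : |A| ≤ (hp:ℝ) * (vp:ℝ) := by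
    have h1 : ((x j - x i)/2) * ((vp:ℝ)+(vn:ℝ)) = (x j - x i) * (vp:ℝ) := by
      rw [← hvpn]; ring
    have h2 : (x j - x i) * (vp:ℝ) ≤ (hp:ℝ)*(vp:ℝ) := mul_le_mul_of_nonneg_right hW2 hvpnn
    linarith [hAbound]
  have hA2 : |A| ≤ ((n:ℝ)/2)^2 := by
    have hncast : (n:ℝ) = (hp:ℝ) + (vp:ℝ) := by rw [hndef]; push_cast; ring
    rw [hncast]
    exact le_sq_half_sum _ _ _ hab
  have hnn2 : (0:ℝ) ≤ (n:ℝ)/2 := div_nonneg (Nat.cast_nonneg _) (by norm_num)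
  have hs : Real.sqrt |A| ≤ (n:ℝ)/2 := by
    calc Real.sqrt |A| ≤ Real.sqrt (((n:ℝ)/2)^2) := Real.sqrt_le_sqrt hA2
    _ = (n:ℝ)/2 := Real.sqrt_sq hnn2
  have hceil : ⌈2 * Real.sqrt |A|⌉ ≤ (n:ℤ) := by
    refine Int.ceil_le.mpr ?_
    push_cast
    linarith
  have hmz : (m:ℤ) = 2*(n:ℤ) := by exact_mod_cast hm2
  rw [ge_iff_le, hmz]
  linarith
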